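/- For every a ∈ ℝ² in the interior of the first quadrant (a₁ > 0 and a₂ > 0) and every integer k ≥ 2, the set E³_k(Σ₁, a) has at most 2 elements, where Σ₁ = {A₁, A₂}. -/
import Mathlib


open Matrix Set

noncomputable section

/-- `XSeq S a k` is the set of all vectors `T_{k-1} ⋯ T_0 · a` with each `T_j ∈ S`
(and `XSeq S a 0 = {a}`). -/
def XSeq {n : ℕ} (S : Set (Matrix (Fin n) (Fin n) ℝ)) (a : Fin n → ℝ) : ℕ → Set (Fin n → ℝ)
  | 0 => {a}
  | k + 1 => ⋃ A ∈ S, A.mulVec '' XSeq S a k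

/-- `PHull S a k` is the convex hull of `XSeq S a k`. -/
def PHull {n : ℕ} (S : Set (Matrix (Fin n) (Fin n) ℝ)) (a : Fin n → ℝ) (k : ℕ) :
    Set (Fin n → ℝ) :=
  convexHull ℝ (XSeq S a k)

/-- `EPts S a k` is the set of extreme points of `PHull S a k`. -/
def EPts {n : ℕ} (S : Set (Matrix (Fin n) (Fin n) ℝ)) (a : Fin n → ℝ) (k : ℕ) :
    Set (Fin n → ℝ) :=
  Set.extremePoints ℝ (PHull S a k)

/-- `NExt S a k` is the number of extreme points of `PHull S a k`. -/
def NExt {n : ℕ} (S : Set (Matrix (Fin n) (Fin n) ℝ)) (a : Fin n → ℝ) (k : ℕ) : ℕ :=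
  (EPts S a k).ncard

def M1 : Matrix (Fin 2) (Fin 2) ℝ := !![0, 1; 1, 0]
def M2 : Matrix (Fin 2) (Fin 2) ℝ := !![1, 1; 0, 1]
def M3 : Matrix (Fin 2) (Fin 2) ℝ := !![1, 0; 1, 1]
def M4 : Matrix (Fin 2) (Fin 2) ℝ := !![1, 1; 1, 0]
def M5 : Matrix (Fin 2) (Fin 2) ℝ := !![0, 1; 1, 1]

/-- Interior of the first quadrant. -/
def intQ1 : Set (Fin 2 → ℝ) := {c | 0 < c 0 ∧ 0 < c 1}
/-- Interior of the second quadrant. -/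
def intQ2 : Set (Fin 2 → ℝ) := {c | c 0 < 0 ∧ 0 < c 1}
/-- Interior of the third quadrant. -/
def intQ3 : Set (Fin 2 → ℝ) := {c | c 0 < 0 ∧ c 1 < 0}
/-- Interior of the fourth quadrant. -/
def intQ4 : Set (Fin 2 → ℝ) := {c | 0 < c 0 ∧ c 1 < 0}

/-- `EQuad S a k Q` is the set of extreme points of `PHull S a k` that maximize the linear
functional `x ↦ c ⬝ᵥ x` over `PHull S a k` for some `c ∈ Q`. -/
def EQuad (S : Set (Matrix (Fin 2) (Fin 2) ℝ)) (a : Fin 2 → ℝ) (k : ℕ)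
    (Q : Set (Fin 2 → ℝ)) : Set (Fin 2 → ℝ) :=
  {p ∈ EPts S a k | ∃ c ∈ Q, ∀ x ∈ PHull S a k, c ⬝ᵥ x ≤ c ⬝ᵥ p}


lemma aux_M1_mulVec (x : Fin 2 → ℝ) : M1.mulVec x = ![x 1, x 0] := by
  funext i; fin_cases i <;>
    simp [M1, Matrix.mulVec, dotProduct, Fin.sum_univ_two]

lemma aux_M2_mulVec (x : Fin 2 → ℝ) : M2.mulVec x = ![x 0 + x 1, x 1] := by
  funext i; fin_cases i <;>
    simp [M2, Matrix.mulVec, dotProduct, Fin.sum_univ_two]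

lemma aux_step_mem {n : ℕ} {S : Set (Matrix (Fin n) (Fin n) ℝ)} {a : Fin n → ℝ} {k : ℕ}
    {A : Matrix (Fin n) (Fin n) ℝ} (hA : A ∈ S) {x : Fin n → ℝ} (hx : x ∈ XSeq S a k) :
    A.mulVec x ∈ XSeq S a (k + 1) := by
  simp only [XSeq, Set.mem_iUnion]
  exact ⟨A, hA, x, hx, rfl⟩

lemma aux_step_dest {n : ℕ} {S : Set (Matrix (Fin n) (Fin n) ℝ)} {a : Fin n → ℝ} {k : ℕ}
    {x : Fin n → ℝ} (hx : x ∈ XSeq S a (k + 1)) :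
    ∃ A ∈ S, ∃ y ∈ XSeq S a k, x = A.mulVec y := by
  simp only [XSeq, Set.mem_iUnion, Set.mem_image] at hx
  obtain ⟨A, hA, y, hy, rfl⟩ := hx
  exact ⟨A, hA, y, hy, rfl⟩

/-- The key invariant: two points `u, v ∈ X_k` with `u 0 = v 1 = m`, which every
element of `X_k` componentwise dominates. -/
lemma aux_inv (a : Fin 2 → ℝ) (ha : 0 < a 0 ∧ 0 < a 1) (k : ℕ) (hk : 2 ≤ k) :
    ∃ u v : Fin 2 → ℝ, u ∈ XSeq {M1, M2} a k ∧ v ∈ XSeq {M1, M2} a k ∧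
      0 ≤ u 0 ∧ u 0 = v 1 ∧ u 0 ≤ u 1 ∧ u 0 ≤ v 0 ∧
      u 1 ≤ v 0 + u 0 ∧ v 0 ≤ u 1 + u 0 ∧
      ∀ x ∈ XSeq {M1, M2} a k, (u 0 ≤ x 0 ∧ u 1 ≤ x 1) ∨ (v 0 ≤ x 0 ∧ v 1 ≤ x 1) := by
  have hM1 : M1 ∈ ({M1, M2} : Set (Matrix (Fin 2) (Fin 2) ℝ)) := by simp
  have hM2 : M2 ∈ ({M1, M2} : Set (Matrix (Fin 2) (Fin 2) ℝ)) := by simp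
  have ha2 : a ∈ XSeq {M1, M2} a 0 := by simp [XSeq]
  induction k, hk using Nat.le_induction with
  | base =>
    rcases le_or_gt (a 0) (a 1) with hle | hlt
    · -- u = M1 (M1 a) = a, v = M2 (M1 a) = (a0+a1, a0)
      refine ⟨M1.mulVec (M1.mulVec a), M2.mulVec (M1.mulVec a),
        aux_step_mem hM1 (aux_step_mem hM1 ha2), aux_step_mem hM2 (aux_step_mem hM1 ha2), ?_⟩
      simp only [aux_M1_mulVec, aux_M2_mulVec]
      refine ⟨by simp; try linarith [ha.1, ha.2], by simp, by simp; try linarith [ha.1, ha.2],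
        by simp; try linarith [ha.1, ha.2], by simp; try linarith [ha.1, ha.2],
        by simp; try linarith [ha.1, ha.2], ?_⟩
      intro x hx
      obtain ⟨A, hA, y, hy, rfl⟩ := aux_step_dest hx
      obtain ⟨B, hB, z, hz, rfl⟩ := aux_step_dest hy
      simp only [XSeq, Set.mem_singleton_iff] at hz
      subst hz
      simp only [Set.mem_insert_iff, Set.mem_singleton_iff] at hA hB
      rcases hA with rfl | rfl <;> rcases hB with rfl | rfl <;>
        simp only [aux_M1_mulVec, aux_M2_mulVec, Matrix.cons_val_zero, Matrix.cons_val_one,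
          Matrix.head_cons] <;>
        first
        | (left; constructor <;> linarith [ha.1, ha.2])
        | (right; constructor <;> linarith [ha.1, ha.2])
    · -- u = M1 (M2 a) = (a1, a0+a1), v = M1 (M1 a) = a
      refine ⟨M1.mulVec (M2.mulVec a), M1.mulVec (M1.mulVec a),
        aux_step_mem hM1 (aux_step_mem hM2 ha2), aux_step_mem hM1 (aux_step_mem hM1 ha2), ?_⟩
      simp only [aux_M1_mulVec, aux_M2_mulVec]
      refine ⟨by simp; try linarith [ha.1, ha.2], by simp,
        by simp; try linarith [ha.1, ha.2], by simp; try linarith [ha.1, ha.2, hlt.le],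
        by simp; try linarith [ha.1, ha.2], by simp; try linarith [ha.1, ha.2], ?_⟩
      intro x hx
      obtain ⟨A, hA, y, hy, rfl⟩ := aux_step_dest hx
      obtain ⟨B, hB, z, hz, rfl⟩ := aux_step_dest hy
      simp only [XSeq, Set.mem_singleton_iff] at hz
      subst hz
      simp only [Set.mem_insert_iff, Set.mem_singleton_iff] at hA hB
      rcases hA with rfl | rfl <;> rcases hB with rfl | rfl <;>
        simp only [aux_M1_mulVec, aux_M2_mulVec, Matrix.cons_val_zero, Matrix.cons_val_one,
          Matrix.head_cons] <;>
        first
        | (left; constructor <;> linarith [ha.1, ha.2, hlt.le])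
        | (right; constructor <;> linarith [ha.1, ha.2, hlt.le])
  | succ k hk ih =>
    obtain ⟨u, v, hu, hv, h0, huv, hu01, huv0, h1, h2, hdom⟩ := ih
    refine ⟨M1.mulVec v, M1.mulVec u, aux_step_mem hM1 hv, aux_step_mem hM1 hu, ?_⟩
    simp only [aux_M1_mulVec]
    refine ⟨by simp; try linarith, by simp [huv], by simp; try linarith,
      by simp; try linarith, by simp; try linarith, by simp; try linarith, ?_⟩
    intro x hx
    obtain ⟨A, hA, y, hy, rfl⟩ := aux_step_dest hx
    simp only [Set.mem_insert_iff, Set.mem_singleton_iff] at hA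
    rcases hdom y hy with ⟨hy0, hy1⟩ | ⟨hy0, hy1⟩ <;> rcases hA with rfl | rfl <;>
      simp only [aux_M1_mulVec, aux_M2_mulVec, Matrix.cons_val_zero, Matrix.cons_val_one,
        Matrix.head_cons] <;>
      first
      | (left; constructor <;> linarith)
      | (right; constructor <;> linarith)

/-- For `a` in the interior of the first quadrant and `k ≥ 2`,
`|E³_k(Σ₁, a)| ≤ 2`. -/
theorem stmt11 (a : Fin 2 → ℝ) (ha : 0 < a 0 ∧ 0 < a 1) (k : ℕ) (hk : 2 ≤ k) :
    (EQuad {M1, M2} a k intQ3).ncard ≤ 2 := by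
  obtain ⟨u, v, hu, hv, h0, huv, hu01, huv0, h1, h2, hdom⟩ := aux_inv a ha k hk
  have hsub : EQuad {M1, M2} a k intQ3 ⊆ {u, v} := by
    rintro p ⟨hpE, c, ⟨hc0, hc1⟩, hmax⟩
    have hpX : p ∈ XSeq {M1, M2} a k := by
      have : p ∈ (convexHull ℝ (XSeq {M1, M2} a k)).extremePoints ℝ := hpE
      exact extremePoints_convexHull_subset this
    have hdot : ∀ x : Fin 2 → ℝ, c ⬝ᵥ x = c 0 * x 0 + c 1 * x 1 := fun x => by
      simp [dotProduct, Fin.sum_univ_two]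
    have hup : c 0 * u 0 + c 1 * u 1 ≤ c 0 * p 0 + c 1 * p 1 := by
      have := hmax u (subset_convexHull ℝ _ hu)
      rwa [hdot, hdot] at this
    have hvp : c 0 * v 0 + c 1 * v 1 ≤ c 0 * p 0 + c 1 * p 1 := by
      have := hmax v (subset_convexHull ℝ _ hv)
      rwa [hdot, hdot] at this
    rcases hdom p hpX with ⟨hp0, hp1⟩ | ⟨hp0, hp1⟩
    · left
      have t0 : c 0 * (p 0 - u 0) ≤ 0 :=
        mul_nonpos_of_nonpos_of_nonneg hc0.le (by linarith)
      have t1 : c 1 * (p 1 - u 1) ≤ 0 :=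
        mul_nonpos_of_nonpos_of_nonneg hc1.le (by linarith)
      have z0 : c 0 * (p 0 - u 0) = 0 := by nlinarith
      have z1 : c 1 * (p 1 - u 1) = 0 := by nlinarith
      have e0 : p 0 = u 0 := by
        rcases mul_eq_zero.mp z0 with h | h
        · exact absurd h hc0.ne
        · linarith
      have e1 : p 1 = u 1 := by
        rcases mul_eq_zero.mp z1 with h | h
        · exact absurd h hc1.ne
        · linarith
      funext i; fin_cases i
      · exact e0
      · exact e1
    · right
      have t0 : c 0 * (p 0 - v 0) ≤ 0 :=
        mul_nonpos_of_nonpos_of_nonneg hc0.le (by linarith)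
      have t1 : c 1 * (p 1 - v 1) ≤ 0 :=
        mul_nonpos_of_nonpos_of_nonneg hc1.le (by linarith)
      have z0 : c 0 * (p 0 - v 0) = 0 := by nlinarith
      have z1 : c 1 * (p 1 - v 1) = 0 := by nlinarith
      have e0 : p 0 = v 0 := by
        rcases mul_eq_zero.mp z0 with h | h
        · exact absurd h hc0.ne
        · linarith
      have e1 : p 1 = v 1 := by
        rcases mul_eq_zero.mp z1 with h | h
        · exact absurd h hc1.ne
        · linarith
      funext i; fin_cases i
      · exact e0
      · exact e1
  calc (EQuad {M1, M2} a k intQ3).ncard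
      ≤ ({u, v} : Set (Fin 2 → ℝ)).ncard :=
        Set.ncard_le_ncard hsub ((Set.finite_singleton v).insert u)
    _ ≤ ({v} : Set (Fin 2 → ℝ)).ncard + 1 := Set.ncard_insert_le u {v}
    _ ≤ 2 := by simp

end
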